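/- arXiv:2010.14410 — 3 statements merged into one kernel-verified Lean document; each statement's English description precedes it below -/
import Mathlib

section
/- Let ε(N) := e^{1/N}·N^{−9/(10(N−3))} and define S(N, j, x) := 2·(−1 + √(1 + ε(N)·x·(ε(N)·x + 2)·(N−j−2))) / ((ε(N)·x + 2)·(N−j−2)). Then: (i) there exists an integer N₀ such that for all N ≥ N₀ and all 1 ≤ j ≤ N−3, every s with 0 < s ≤ S(N, j, s_N^{(j−1)}) is (N,j)-good; and (ii) for every N ≥ 4 and 1 ≤ j ≤ N−3, the function x ↦ S(N, j, x) is strictly increasing on (0, ∞). -/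
open Real Finset

/-- I_s = [(π−s)/2, (π+s)/2]. -/
noncomputable def Iset (s : ℝ) : Set ℝ := Set.Icc ((Real.pi - s) / 2) ((Real.pi + s) / 2)

/-- F(x₁,…,x_{2r}) = Σ_{m=1}^{r} cos(a_m)cos(b_m)·∏_{ℓ=1}^{m−1} sin(a_ℓ)sin(b_ℓ),
where a_m = x_{2m−1}, b_m = x_{2m}. -/
noncomputable def Fangle (a b : ℕ → ℝ) (r : ℕ) : ℝ :=
  ∑ m ∈ Finset.Icc 1 r, Real.cos (a m) * Real.cos (b m) *
    ∏ l ∈ Finset.Icc 1 (m - 1), (Real.sin (a l) * Real.sin (b l))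

/-- X(x₁,…,x_{2r}) = ∏_{m=1}^{r} sin(a_m)sin(b_m). -/
noncomputable def Xangle (a b : ℕ → ℝ) (r : ℕ) : ℝ :=
  ∏ m ∈ Finset.Icc 1 r, (Real.sin (a m) * Real.sin (b m))

/-- E(m,s) = m·sin²(s/2) − cos(s/2)^{2m} + sin(s/2). -/
noncomputable def Efun (m : ℕ) (s : ℝ) : ℝ :=
  (m : ℝ) * Real.sin (s / 2) ^ 2 - Real.cos (s / 2) ^ (2 * m) + Real.sin (s / 2)

/-- G(N,j,x,s) = (N−j−2)·sin²(s/2) − sin(x/2)·cos(s/2)^{2(N−j−2)} + sin(s/2). -/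
noncomputable def Gfun (N j : ℕ) (x s : ℝ) : ℝ :=
  ((N - j - 2 : ℕ) : ℝ) * Real.sin (s / 2) ^ 2
    - Real.sin (x / 2) * Real.cos (s / 2) ^ (2 * (N - j - 2)) + Real.sin (s / 2)

/-- The sequence s_N^{(j)}: s_N^{(0)} = inf{s > 0 : E(N−2,s) = 0},
s_N^{(j)} = inf{s > 0 : G(N,j,s_N^{(j−1)},s) = 0}. -/
noncomputable def sSeq (N : ℕ) : ℕ → ℝ
  | 0 => sInf {s : ℝ | 0 < s ∧ Efun (N - 2) s = 0}
  | j + 1 => sInf {s : ℝ | 0 < s ∧ Gfun N (j + 1) (sSeq N j) s = 0}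

/-- s is N-good: for all x₁,…,x_{2(N−2)} ∈ I_s,
I_s ⊆ α_{N−1,N}({x₁}×⋯×{x_{2(N−2)}}×(0,π)). -/
def NGood (N : ℕ) (s : ℝ) : Prop :=
  ∀ a b : ℕ → ℝ, (∀ m ∈ Finset.Icc 1 (N - 2), a m ∈ Iset s ∧ b m ∈ Iset s) →
    ∀ y ∈ Iset s, ∃ φ ∈ Set.Ioo (0 : ℝ) Real.pi,
      Real.arccos (Fangle a b (N - 2) + Real.cos φ * Xangle a b (N - 2)) = y

/-- s is (N,j)-good: for all x₁,…,x_{2(N−j−2)} ∈ I_s,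
I_s ⊆ α_{N−j−1,N−j}({x₁}×⋯×{x_{2(N−j−2)}}×I_{s_N^{(j−1)}}). -/
def NjGood (N j : ℕ) (s : ℝ) : Prop :=
  ∀ a b : ℕ → ℝ, (∀ m ∈ Finset.Icc 1 (N - j - 2), a m ∈ Iset s ∧ b m ∈ Iset s) →
    ∀ y ∈ Iset s, ∃ φ ∈ Iset (sSeq N (j - 1)),
      Real.arccos (Fangle a b (N - j - 2) + Real.cos φ * Xangle a b (N - j - 2)) = y

/-- ε(N) = e^{1/N}·N^{−9/(10(N−3))}. -/
noncomputable def epsN (N : ℕ) : ℝ :=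
  Real.exp (1 / (N : ℝ)) * (N : ℝ) ^ (-(9 : ℝ) / (10 * ((N : ℝ) - 3)))

/-- S(N,j,x) = 2(−1 + √(1 + ε(N)x(ε(N)x+2)(N−j−2))) / ((ε(N)x+2)(N−j−2)). -/
noncomputable def Sfun (N j : ℕ) (x : ℝ) : ℝ :=
  2 * (-1 + Real.sqrt (1 + epsN N * x * (epsN N * x + 2) * ((N : ℝ) - j - 2))) /
    ((epsN N * x + 2) * ((N : ℝ) - j - 2))


lemma quad_ident {ρ t : ℝ} (hρ : 0 < ρ) (ht : 0 ≤ t) :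
    0 ≤ 2 * (-1 + Real.sqrt (1 + t * (t + 2) * ρ)) / ((t + 2) * ρ) ∧
    (t + 2) * ρ * (2 * (-1 + Real.sqrt (1 + t * (t + 2) * ρ)) / ((t + 2) * ρ)) ^ 2 / 4
      + 2 * (-1 + Real.sqrt (1 + t * (t + 2) * ρ)) / ((t + 2) * ρ) = t := by
  have hq : (0:ℝ) < (t + 2) * ρ := by positivity
  have hD : (0:ℝ) ≤ 1 + t * (t + 2) * ρ := by positivity
  have hc2 : Real.sqrt (1 + t * (t + 2) * ρ) ^ 2 = 1 + t * (t + 2) * ρ := Real.sq_sqrt hD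
  have hc1 : 1 ≤ Real.sqrt (1 + t * (t + 2) * ρ) := by
    exact Real.one_le_sqrt.mpr (by nlinarith)
  constructor
  · apply div_nonneg _ hq.le; linarith
  · field_simp
    nlinarith [hc2, hc1, sq_nonneg (Real.sqrt (1 + t * (t + 2) * ρ))]

set_option maxHeartbeats 1000000 in
lemma star {x ε : ℝ} {r : ℕ} (hr : 1 ≤ r) (hx0 : 0 < x) (hx : x ≤ 1/2)
    (hε0 : 0 < ε) (hε : ε ≤ 1 - x^2/16) {s : ℝ} (hs0 : 0 < s)
    (hsS : s ≤ 2 * (-1 + Real.sqrt (1 + ε * x * (ε * x + 2) * (r:ℝ))) / ((ε * x + 2) * (r:ℝ))) :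
    Real.sin (s/2) + (r:ℝ) * Real.sin (s/2) ^ 2
      ≤ Real.sin (x/2) * Real.cos (s/2) ^ (2 * r) ∧ s ≤ x := by
  have hρ : (1:ℝ) ≤ (r:ℝ) := by exact_mod_cast hr
  have ht0 : 0 < ε * x := by positivity
  obtain ⟨hSn, I⟩ := quad_ident (t := ε * x) (ρ := (r:ℝ)) (by linarith) ht0.le
  obtain ⟨S, hSdef⟩ : ∃ S : ℝ,
      S = 2 * (-1 + Real.sqrt (1 + ε * x * (ε * x + 2) * (r:ℝ))) / ((ε * x + 2) * (r:ℝ)) :=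
    ⟨_, rfl⟩
  rw [← hSdef] at hsS I hSn
  have hSpos : 0 < S := lt_of_lt_of_le hs0 hsS
  have hq0 : 0 ≤ (ε * x + 2) * (r:ℝ) * S ^ 2 / 4 := by positivity
  have hSt : S ≤ ε * x := by linarith [I]
  have hε1 : ε ≤ 1 := by nlinarith [sq_nonneg x]
  have hεx : ε * x ≤ x := by nlinarith
  have hsx : s ≤ x := le_trans hsS (le_trans hSt hεx)
  have hS14 : S ≤ 1/2 := le_trans hSt (le_trans hεx hx)
  have hu0 : 0 < s / 2 := by linarith
  have huT : s / 2 ≤ S / 2 := by linarith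
  have hT14 : S / 2 ≤ 1/4 := by linarith
  have hpi : (3:ℝ) < Real.pi := Real.pi_gt_three
  have h1 : Real.sin (s/2) ≤ s/2 := Real.sin_le hu0.le
  have h1' : 0 ≤ Real.sin (s/2) :=
    Real.sin_nonneg_of_nonneg_of_le_pi hu0.le (by linarith)
  have h2 : Real.sin (s/2) ^ 2 ≤ (s/2) ^ 2 := by
    apply pow_le_pow_left₀ h1' h1
  have h4 : 2 * (S/2 + (r:ℝ) * (S/2)^2) = (ε * x) * (1 - (r:ℝ) * (S/2)^2) := by
    linear_combination I
  have h5 : 0 < 1 - (r:ℝ) * (S/2)^2 := by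
    by_contra hcon
    push_neg at hcon
    nlinarith [mul_nonpos_of_nonneg_of_nonpos ht0.le (by linarith : 1 - (r:ℝ) * (S/2)^2 ≤ 0)]
  have h6 : ε * x / 2 ≤ Real.sin (x/2) := by
    have := Real.sin_gt_sub_cube (by linarith : 0 < x/2)
    nlinarith
  have h7 : 1 - (s/2)^2/2 ≤ Real.cos (s/2) := Real.one_sub_sq_div_two_le_cos
  have h8 : 1 - (r:ℝ) * (s/2)^2 ≤ (1 - (s/2)^2/2) ^ (2 * r) := by
    have hb := one_add_mul_le_pow (a := -((s/2)^2/2)) (by nlinarith) (2 * r)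
    calc 1 - (r:ℝ) * (s/2)^2 = 1 + ((2 * r : ℕ):ℝ) * (-((s/2)^2/2)) := by push_cast; ring
      _ ≤ (1 + -((s/2)^2/2)) ^ (2 * r) := hb
      _ = (1 - (s/2)^2/2) ^ (2 * r) := by rw [← sub_eq_add_neg]
  have h9 : (1 - (s/2)^2/2) ^ (2 * r) ≤ Real.cos (s/2) ^ (2 * r) := by
    apply pow_le_pow_left₀ (by nlinarith) h7
  have hss : (s/2)^2 ≤ (S/2)^2 := pow_le_pow_left₀ hu0.le huT 2
  have h10 : 1 - (r:ℝ) * (S/2)^2 ≤ 1 - (r:ℝ) * (s/2)^2 := by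
    nlinarith [mul_le_mul_of_nonneg_left hss (by linarith : (0:ℝ) ≤ (r:ℝ))]
  have hsinx : 0 ≤ Real.sin (x/2) :=
    Real.sin_nonneg_of_nonneg_of_le_pi (by linarith) (by linarith)
  constructor
  · calc Real.sin (s/2) + (r:ℝ) * Real.sin (s/2) ^ 2
        ≤ s/2 + (r:ℝ) * (s/2)^2 := by nlinarith
      _ ≤ S/2 + (r:ℝ) * (S/2)^2 := by nlinarith
      _ = (ε * x / 2) * (1 - (r:ℝ) * (S/2)^2) := by linarith [h4]
      _ ≤ Real.sin (x/2) * (1 - (r:ℝ) * (S/2)^2) :=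
          mul_le_mul_of_nonneg_right h6 h5.le
      _ ≤ Real.sin (x/2) * Real.cos (s/2) ^ (2 * r) := by
          apply mul_le_mul_of_nonneg_left _ hsinx
          exact le_trans (le_trans h10 h8) h9
  · exact hsx

lemma Smono {ρ t1 t2 S1 S2 : ℝ} (hρ : 1 ≤ ρ) (ht1 : 0 < t1) (ht : t1 < t2)
    (hS1 : 0 ≤ S1) (hS2 : 0 ≤ S2)
    (I1 : (t1 + 2) * ρ * S1 ^ 2 / 4 + S1 = t1)
    (I2 : (t2 + 2) * ρ * S2 ^ 2 / 4 + S2 = t2) : S1 < S2 := by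
  by_contra h
  push_neg at h
  have hS1pos : 0 < S1 := by
    rcases hS1.lt_or_eq with h' | h'
    · exact h'
    · exfalso; rw [← h'] at I1; norm_num at I1; linarith
  have e1 : t1 * (1 - ρ * S1 ^ 2 / 4) = ρ * S1 ^ 2 / 2 + S1 := by nlinarith [I1]
  have e2 : t2 * (1 - ρ * S2 ^ 2 / 4) = ρ * S2 ^ 2 / 2 + S2 := by nlinarith [I2]
  have h1 : 0 < 1 - ρ * S1 ^ 2 / 4 := by nlinarith
  have hsq : S2 ^ 2 ≤ S1 ^ 2 := by nlinarith
  have h2 : 1 - ρ * S1 ^ 2 / 4 ≤ 1 - ρ * S2 ^ 2 / 4 := by nlinarith [mul_le_mul_of_nonneg_left hsq (by linarith : (0:ℝ) ≤ ρ)]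
  nlinarith [mul_lt_mul_of_pos_right ht (lt_of_lt_of_le h1 h2)]

lemma epsN_pos {N : ℕ} (hN : 0 < N) : 0 < Real.exp (1 / (N : ℝ)) * (N : ℝ) ^ (-(9 : ℝ) / (10 * ((N : ℝ) - 3))) := by
  have : (0:ℝ) < N := by exact_mod_cast hN
  positivity

lemma epsN_le {N : ℕ} (hN : 100 ≤ N) : epsN N ≤ 1 - 1 / ((N:ℝ) - 2) := by
  have hNR : (100:ℝ) ≤ (N:ℝ) := by exact_mod_cast hN
  have hNpos : (0:ℝ) < (N:ℝ) := by linarith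
  have hd3 : (0:ℝ) < (N:ℝ) - 3 := by linarith
  have hd2 : (0:ℝ) < (N:ℝ) - 2 := by linarith
  have hL : (4:ℝ) ≤ Real.log (N:ℝ) := by
    rw [Real.le_log_iff_exp_le hNpos]
    have h1 : Real.exp 4 = (Real.exp 1) ^ 4 := by
      rw [← Real.exp_nat_mul]; norm_num
    have h2 : (Real.exp 1) ^ 4 ≤ (2.7182818286 : ℝ) ^ 4 := by
      apply pow_le_pow_left₀ (Real.exp_pos 1).le Real.exp_one_lt_d9.le
    nlinarith
  obtain ⟨a, ha⟩ : ∃ a : ℝ, a = 9 * Real.log (N:ℝ) / (10 * ((N:ℝ) - 3)) - 1 / (N:ℝ) := ⟨_, rfl⟩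
  have hε : epsN N = Real.exp (-a) := by
    unfold epsN
    rw [Real.rpow_def_of_pos hNpos, ← Real.exp_add]
    congr 1
    rw [ha]; ring
  have h36 : 36 / (10 * ((N:ℝ) - 3)) ≤ 9 * Real.log (N:ℝ) / (10 * ((N:ℝ) - 3)) := by
    gcongr
    linarith
  have hsum : 2 / ((N:ℝ) - 2) + 1 / (N:ℝ) ≤ 36 / (10 * ((N:ℝ) - 3)) := by
    rw [div_add_div _ _ hd2.ne' hNpos.ne', div_le_div_iff₀ (by positivity) (by positivity)]
    nlinarith
  have ha2 : 2 / ((N:ℝ) - 2) ≤ a := by rw [ha]; linarith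
  have hu : (0:ℝ) < 1 / ((N:ℝ) - 2) := by positivity
  have h22 : 2 / ((N:ℝ) - 2) = 2 * (1 / ((N:ℝ) - 2)) := by ring
  have ha2' : 2 * (1 / ((N:ℝ) - 2)) ≤ a := by rw [← h22]; exact ha2
  have h1a : (0:ℝ) < 1 + a := by linarith
  have he : Real.exp (-a) * (1 + a) ≤ 1 := by
    calc Real.exp (-a) * (1 + a) = Real.exp (-a) * (a + 1) := by ring
      _ ≤ Real.exp (-a) * Real.exp a :=
          mul_le_mul_of_nonneg_left (Real.add_one_le_exp a) (Real.exp_pos (-a)).le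
      _ = 1 := by rw [← Real.exp_add]; simp
  have hfin : Real.exp (-a) ≤ 1 - 1 / ((N:ℝ) - 2) := by
    have hb : 1 / ((N:ℝ) - 2) ≤ 1/2 := by
      rw [div_le_div_iff₀ hd2 two_pos]; linarith
    have key : 1 ≤ (1 - 1 / ((N:ℝ) - 2)) * (1 + a) := by
      nlinarith [mul_nonneg (by linarith : (0:ℝ) ≤ a) (by linarith : (0:ℝ) ≤ 1/2 - 1/((N:ℝ)-2))]
    have s1 : Real.exp (-a) ≤ 1 / (1 + a) := by rw [le_div_iff₀ h1a]; exact he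
    have s2 : 1 / (1 + a) ≤ 1 - 1 / ((N:ℝ) - 2) := by
      rw [div_le_iff₀ h1a]; linarith [key]
    linarith
  rw [hε]; exact hfin


lemma sInf_zero_set {f : ℝ → ℝ} (hf : Continuous f) (h0 : f 0 < 0) {u : ℝ} (hu : 0 < u)
    (hfu : 0 ≤ f u) : 0 < sInf {s : ℝ | 0 < s ∧ f s = 0} ∧ sInf {s : ℝ | 0 < s ∧ f s = 0} ≤ u := by
  -- existence of a zero in (0, u]
  have hIVT : ∃ z ∈ Set.Icc (0:ℝ) u, f z = 0 := by
    have := intermediate_value_Icc hu.le hf.continuousOn (a := 0) (b := u)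
    have h0mem : (0:ℝ) ∈ Set.Icc (f 0) (f u) := ⟨h0.le, hfu⟩
    obtain ⟨z, hz, hfz⟩ := this h0mem
    exact ⟨z, hz, hfz⟩
  obtain ⟨z, hz, hfz⟩ := hIVT
  have hzpos : 0 < z := by
    rcases hz.1.lt_or_eq with h | h
    · exact h
    · exfalso; rw [← h] at hfz; linarith
  have hne : {s : ℝ | 0 < s ∧ f s = 0}.Nonempty := ⟨z, hzpos, hfz⟩
  have hbdd : BddBelow {s : ℝ | 0 < s ∧ f s = 0} := ⟨0, fun w hw => hw.1.le⟩
  -- small δ with f < 0 on [0, δ)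
  have hev : ∀ᶠ y in nhds (0:ℝ), f y < 0 := by
    have := hf.continuousAt (x := 0)
    exact this.eventually_mem (Iio_mem_nhds h0)
  rw [Metric.eventually_nhds_iff] at hev
  obtain ⟨δ, hδ, hδ2⟩ := hev
  constructor
  · have : δ / 2 ≤ sInf {s : ℝ | 0 < s ∧ f s = 0} := by
      apply le_csInf hne
      intro w hw
      by_contra hcon
      push_neg at hcon
      have : dist w 0 < δ := by
        rw [Real.dist_eq, sub_zero, abs_of_pos hw.1]; linarith
      exact absurd hw.2 (by linarith [hδ2 this])
    linarith
  · exact le_trans (csInf_le hbdd ⟨hzpos, hfz⟩) hz.2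

set_option maxHeartbeats 1000000 in
lemma sSeq_bounds {N : ℕ} (hN : 100 ≤ N) (j : ℕ) :
    0 < sSeq N j ∧ sSeq N j ≤ Real.pi / Real.sqrt ((N:ℝ) - 2) := by
  have hN2 : (0:ℝ) < (N:ℝ) - 2 := by
    have : (100:ℝ) ≤ (N:ℝ) := by exact_mod_cast hN
    linarith
  have hNR : (100:ℝ) ≤ (N:ℝ) := by exact_mod_cast hN
  have hsq8 : (8:ℝ) ≤ Real.sqrt ((N:ℝ) - 2) := by
    rw [show (8:ℝ) = Real.sqrt 64 by
      rw [show (64:ℝ) = 8^2 by norm_num, Real.sqrt_sq (by norm_num)]]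
    exact Real.sqrt_le_sqrt (by linarith)
  have hsqpos : (0:ℝ) < Real.sqrt ((N:ℝ) - 2) := by linarith
  set B : ℝ := Real.pi / Real.sqrt ((N:ℝ) - 2) with hBdef
  have hBpos : 0 < B := by positivity
  have hBhalf : B ≤ 1/2 := by
    rw [hBdef, div_le_iff₀ hsqpos]
    nlinarith [Real.pi_le_four]
  have hsinB : Real.sin (B/2) ^ 2 ≥ 1 / ((N:ℝ) - 2) := by
    have h1 : 2 / Real.pi * (B/2) ≤ Real.sin (B/2) :=
      Real.mul_le_sin (by positivity) (by nlinarith [Real.pi_gt_three])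
    have h2 : 2 / Real.pi * (B/2) = 1 / Real.sqrt ((N:ℝ) - 2) := by
      rw [hBdef]; field_simp
    rw [h2] at h1
    have h3 : (1 / Real.sqrt ((N:ℝ) - 2)) ^ 2 = 1 / ((N:ℝ) - 2) := by
      rw [div_pow, one_pow, Real.sq_sqrt hN2.le]
    calc 1 / ((N:ℝ) - 2) = (1 / Real.sqrt ((N:ℝ) - 2)) ^ 2 := h3.symm
      _ ≤ Real.sin (B/2) ^ 2 := by
          apply pow_le_pow_left₀ (by positivity) h1
  induction j with
  | zero =>
    rw [sSeq]
    apply sInf_zero_set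
    · unfold Efun; fun_prop
    · unfold Efun; simp
    · exact hBpos
    · unfold Efun
      have hm : ((N - 2 : ℕ) : ℝ) = (N:ℝ) - 2 := by
        have : 2 ≤ N := by omega
        push_cast [this]; ring
      rw [hm]
      have hc : Real.cos (B/2) ^ (2 * (N - 2)) ≤ 1 :=
        pow_le_one₀ (Real.cos_nonneg_of_mem_Icc ⟨by linarith [Real.pi_gt_three], by nlinarith [Real.pi_gt_three]⟩) (Real.cos_le_one _)
      have hs : 0 ≤ Real.sin (B/2) :=
        Real.sin_nonneg_of_nonneg_of_le_pi (by positivity) (by nlinarith [Real.pi_gt_three])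
      have : ((N:ℝ) - 2) * Real.sin (B/2) ^ 2 ≥ 1 := by
        rw [ge_iff_le, show (1:ℝ) = ((N:ℝ)-2) * (1/((N:ℝ)-2)) by field_simp]
        exact mul_le_mul_of_nonneg_left hsinB hN2.le
      linarith
  | succ j ih =>
    obtain ⟨hx0, hxB⟩ := ih
    have hx2 : sSeq N j ≤ 1/2 := le_trans hxB hBhalf
    have hsinx : 0 < Real.sin (sSeq N j / 2) :=
      Real.sin_pos_of_pos_of_lt_pi (by linarith) (by nlinarith [Real.pi_gt_three])
    rw [sSeq]
    have := sInf_zero_set (f := Gfun N (j+1) (sSeq N j))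
      (by unfold Gfun; fun_prop)
      (by unfold Gfun; simp; linarith)
      hx0
      (by
        unfold Gfun
        have hc : Real.cos (sSeq N j / 2) ^ (2 * (N - (j+1) - 2)) ≤ 1 :=
          pow_le_one₀ (Real.cos_nonneg_of_mem_Icc ⟨by linarith [Real.pi_gt_three], by nlinarith [Real.pi_gt_three]⟩) (Real.cos_le_one _)
        have h1 : (0:ℝ) ≤ ((N - (j+1) - 2 : ℕ) : ℝ) * Real.sin (sSeq N j / 2) ^ 2 := by positivity
        nlinarith)
    exact ⟨this.1, le_trans this.2 hxB⟩


lemma sin_mem_bounds {s θ : ℝ} (hs0 : 0 < s) (hsπ : s < Real.pi) (hθ : θ ∈ Iset s) :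
    |Real.cos θ| ≤ Real.sin (s/2) ∧ Real.cos (s/2) ≤ Real.sin θ ∧ Real.sin θ ≤ 1 := by
  obtain ⟨h1, h2⟩ := hθ
  have hπ : (0:ℝ) < Real.pi := Real.pi_pos
  have hz : |Real.pi/2 - θ| ≤ s/2 := by
    rw [abs_le]; constructor <;> linarith
  have hs2 : s/2 < Real.pi/2 := by linarith
  refine ⟨?_, ?_, Real.sin_le_one θ⟩
  · rw [← Real.sin_pi_div_two_sub θ]
    rw [abs_le]
    have hmem1 : Real.pi/2 - θ ∈ Set.Icc (-(Real.pi/2)) (Real.pi/2) := by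
      rw [abs_le] at hz; constructor <;> [linarith [hz.1]; linarith [hz.2]]
    have hmem2 : s/2 ∈ Set.Icc (-(Real.pi/2)) (Real.pi/2) := by
      constructor <;> linarith
    have hmem3 : -(s/2) ∈ Set.Icc (-(Real.pi/2)) (Real.pi/2) := by
      constructor <;> linarith
    rw [abs_le] at hz
    constructor
    · have := Real.strictMonoOn_sin.monotoneOn hmem3 hmem1 hz.1
      rwa [Real.sin_neg] at this
    · exact Real.strictMonoOn_sin.monotoneOn hmem1 hmem2 hz.2
  · calc Real.cos (s/2) ≤ Real.cos |Real.pi/2 - θ| :=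
          Real.cos_le_cos_of_nonneg_of_le_pi (abs_nonneg _) (by linarith) hz
      _ = Real.cos (Real.pi/2 - θ) := Real.cos_abs _
      _ = Real.sin θ := Real.cos_pi_div_two_sub θ

lemma stepA {N j : ℕ} {s : ℝ} (hs0 : 0 < s) (hsπ : s < Real.pi)
    (hx0 : 0 < sSeq N (j-1)) (hxπ : sSeq N (j-1) ≤ Real.pi)
    (key : Real.sin (s/2) + ((N - j - 2 : ℕ):ℝ) * Real.sin (s/2)^2
      ≤ Real.sin (sSeq N (j-1) / 2) * Real.cos (s/2) ^ (2 * (N - j - 2))) :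
    NjGood N j s := by
  intro a b hab y hy
  set x : ℝ := sSeq N (j-1) with hxdef
  set r : ℕ := N - j - 2 with hrdef
  have hπ : (0:ℝ) < Real.pi := Real.pi_pos
  have hcs : 0 < Real.cos (s/2) :=
    Real.cos_pos_of_mem_Ioo ⟨by linarith, by linarith⟩
  have hsinx0 : 0 ≤ Real.sin (x/2) :=
    Real.sin_nonneg_of_nonneg_of_le_pi (by linarith) (by linarith)
  have hsinx1 : Real.sin (x/2) ≤ 1 := Real.sin_le_one _
  -- bounds on X
  have hXl : Real.cos (s/2) ^ (2 * r) ≤ Xangle a b r := by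
    unfold Xangle
    calc Real.cos (s/2) ^ (2 * r) = ∏ _m ∈ Finset.Icc 1 r, Real.cos (s/2) ^ 2 := by
          rw [Finset.prod_const, Nat.card_Icc]
          simp [← pow_mul, mul_comm]
      _ ≤ ∏ m ∈ Finset.Icc 1 r, (Real.sin (a m) * Real.sin (b m)) := by
          apply Finset.prod_le_prod (fun i _ => by positivity)
          intro i hi
          obtain ⟨hai, hbi⟩ := hab i hi
          obtain ⟨_, ha2, _⟩ := sin_mem_bounds hs0 hsπ hai
          obtain ⟨_, hb2, _⟩ := sin_mem_bounds hs0 hsπ hbi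
          calc Real.cos (s/2) ^ 2 = Real.cos (s/2) * Real.cos (s/2) := sq (Real.cos (s/2)) ▸ by ring
            _ ≤ Real.sin (a i) * Real.sin (b i) := mul_le_mul ha2 hb2 hcs.le (by linarith)
  have hXu : Xangle a b r ≤ 1 := by
    unfold Xangle
    apply Finset.prod_le_one
    · intro i hi
      obtain ⟨hai, hbi⟩ := hab i hi
      obtain ⟨_, ha2, _⟩ := sin_mem_bounds hs0 hsπ hai
      obtain ⟨_, hb2, _⟩ := sin_mem_bounds hs0 hsπ hbi
      exact mul_nonneg (by linarith) (by linarith)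
    · intro i hi
      obtain ⟨hai, hbi⟩ := hab i hi
      obtain ⟨_, ha2, ha3⟩ := sin_mem_bounds hs0 hsπ hai
      obtain ⟨_, hb2, hb3⟩ := sin_mem_bounds hs0 hsπ hbi
      exact mul_le_one₀ ha3 (by linarith) hb3
  have hX0 : 0 < Xangle a b r := lt_of_lt_of_le (by positivity) hXl
  -- bound on F
  have hF : |Fangle a b r| ≤ (r:ℝ) * Real.sin (s/2)^2 := by
    unfold Fangle
    calc |∑ m ∈ Finset.Icc 1 r, Real.cos (a m) * Real.cos (b m) *
          ∏ l ∈ Finset.Icc 1 (m-1), (Real.sin (a l) * Real.sin (b l))|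
        ≤ ∑ m ∈ Finset.Icc 1 r, |Real.cos (a m) * Real.cos (b m) *
          ∏ l ∈ Finset.Icc 1 (m-1), (Real.sin (a l) * Real.sin (b l))| :=
          Finset.abs_sum_le_sum_abs _ _
      _ ≤ ∑ _m ∈ Finset.Icc 1 r, Real.sin (s/2)^2 := by
          apply Finset.sum_le_sum
          intro m hm
          obtain ⟨ham, hbm⟩ := hab m hm
          obtain ⟨ha1, _, _⟩ := sin_mem_bounds hs0 hsπ ham
          obtain ⟨hb1, _, _⟩ := sin_mem_bounds hs0 hsπ hbm
          rw [abs_mul, abs_mul]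
          have hprod : |∏ l ∈ Finset.Icc 1 (m-1), (Real.sin (a l) * Real.sin (b l))| ≤ 1 := by
            rw [Finset.abs_prod]
            apply Finset.prod_le_one (fun i _ => abs_nonneg _)
            intro i _
            rw [abs_mul]
            exact mul_le_one₀ (abs_le.mpr ⟨Real.neg_one_le_sin _, Real.sin_le_one _⟩)
              (abs_nonneg _) (abs_le.mpr ⟨Real.neg_one_le_sin _, Real.sin_le_one _⟩)
          have hsin_nn : 0 ≤ Real.sin (s/2) :=
            Real.sin_nonneg_of_nonneg_of_le_pi (by linarith) (by linarith)
          calc |Real.cos (a m)| * |Real.cos (b m)| *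
                |∏ l ∈ Finset.Icc 1 (m-1), (Real.sin (a l) * Real.sin (b l))|
              ≤ (Real.sin (s/2) * Real.sin (s/2)) * 1 := by
                apply mul_le_mul _ hprod (abs_nonneg _) (by positivity)
                exact mul_le_mul ha1 hb1 (abs_nonneg _) hsin_nn
            _ = Real.sin (s/2)^2 := by ring
      _ = (r:ℝ) * Real.sin (s/2)^2 := by
          rw [Finset.sum_const, Nat.card_Icc]
          simp [nsmul_eq_mul]
  -- bound on cos y
  obtain ⟨hy1, hy2⟩ := hy
  have hy0 : 0 ≤ y := by linarith
  have hyπ : y ≤ Real.pi := by linarith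
  have hcy : |Real.cos y| ≤ Real.sin (s/2) := (sin_mem_bounds hs0 hsπ ⟨hy1, hy2⟩).1
  -- the target value for cos φ
  have hnum : |Real.cos y - Fangle a b r| ≤ Real.sin (x/2) * Xangle a b r := by
    calc |Real.cos y - Fangle a b r| ≤ |Real.cos y| + |Fangle a b r| := abs_sub _ _
      _ ≤ Real.sin (s/2) + (r:ℝ) * Real.sin (s/2)^2 := by linarith
      _ ≤ Real.sin (x/2) * Real.cos (s/2) ^ (2 * r) := key
      _ ≤ Real.sin (x/2) * Xangle a b r :=
          mul_le_mul_of_nonneg_left hXl hsinx0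
  set c : ℝ := (Real.cos y - Fangle a b r) / Xangle a b r with hcdef
  have hc : |c| ≤ Real.sin (x/2) := by
    rw [hcdef, abs_div, abs_of_pos hX0, div_le_iff₀ hX0]
    exact hnum
  rw [abs_le] at hc
  have hc1 : -1 ≤ c := by linarith
  have hc2 : c ≤ 1 := by linarith
  refine ⟨Real.arccos c, ?_, ?_⟩
  · have harc : Real.arccos c = Real.pi/2 - Real.arcsin c := Real.arccos_eq_pi_div_two_sub_arcsin c
    have hx2 : x/2 ≤ Real.pi/2 := by linarith
    have hup : Real.arcsin c ≤ x/2 := by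
      calc Real.arcsin c ≤ Real.arcsin (Real.sin (x/2)) := Real.monotone_arcsin hc.2
        _ = x/2 := Real.arcsin_sin (by linarith) hx2
    have hlo : -(x/2) ≤ Real.arcsin c := by
      have : Real.arcsin (-Real.sin (x/2)) ≤ Real.arcsin c := Real.monotone_arcsin hc.1
      rwa [← Real.sin_neg, Real.arcsin_sin (by linarith) (by linarith)] at this
    constructor
    · rw [harc]; linarith
    · rw [harc]; linarith
  · rw [Real.cos_arccos hc1 hc2, hcdef, div_mul_cancel₀ _ hX0.ne']
    rw [show Fangle a b r + (Real.cos y - Fangle a b r) = Real.cos y by ring]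
    exact Real.arccos_cos hy0 hyπ



lemma epsN_pos' {N : ℕ} (hN : 0 < N) : 0 < epsN N := by
  unfold epsN; exact epsN_pos hN

lemma part2 (N : ℕ) (hN : 4 ≤ N) (j : ℕ) (_hj1 : 1 ≤ j) (hj : j ≤ N - 3) :
    StrictMonoOn (Sfun N j) (Set.Ioi (0 : ℝ)) := by
  have hNj : j + 3 ≤ N := by omega
  have hρ : (1:ℝ) ≤ (N : ℝ) - j - 2 := by
    have : (j:ℝ) + 3 ≤ (N:ℝ) := by exact_mod_cast hNj
    linarith
  have hε : 0 < epsN N := epsN_pos' (by omega)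
  intro x1 hx1 x2 hx2 hlt
  simp only [Set.mem_Ioi] at hx1 hx2
  set ρ : ℝ := (N : ℝ) - j - 2 with hρdef
  have ht1 : 0 < epsN N * x1 := by positivity
  have ht2 : 0 < epsN N * x2 := by positivity
  have ht : epsN N * x1 < epsN N * x2 := mul_lt_mul_of_pos_left hlt hε
  obtain ⟨hS1n, I1⟩ := quad_ident (t := epsN N * x1) (by linarith : (0:ℝ) < ρ) ht1.le
  obtain ⟨hS2n, I2⟩ := quad_ident (t := epsN N * x2) (by linarith : (0:ℝ) < ρ) ht2.le
  exact Smono hρ ht1 ht hS1n hS2n I1 I2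

/-- (i) for N large, 1 ≤ j ≤ N−3, every 0 < s ≤ S(N,j,s_N^{(j−1)}) is
(N,j)-good; (ii) for every N ≥ 4 and 1 ≤ j ≤ N−3, x ↦ S(N,j,x) is strictly
increasing on (0,∞). -/
theorem NjGood_of_le_Sfun_and_Sfun_strictMono :
    (∃ N₀ : ℕ, ∀ N : ℕ, N₀ ≤ N → ∀ j : ℕ, 1 ≤ j → j ≤ N - 3 →
      ∀ s : ℝ, 0 < s → s ≤ Sfun N j (sSeq N (j - 1)) → NjGood N j s) ∧
    (∀ N : ℕ, 4 ≤ N → ∀ j : ℕ, 1 ≤ j → j ≤ N - 3 →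
      StrictMonoOn (Sfun N j) (Set.Ioi (0 : ℝ))) := by
  constructor
  · refine ⟨100, ?_⟩
    intro N hN j hj1 hj s hs0 hsS
    have hNR : (100:ℝ) ≤ (N:ℝ) := by exact_mod_cast hN
    have hN2 : (0:ℝ) < (N:ℝ) - 2 := by linarith
    have hsq8 : (8:ℝ) ≤ Real.sqrt ((N:ℝ) - 2) := by
      rw [show (8:ℝ) = Real.sqrt 64 by
        rw [show (64:ℝ) = 8^2 by norm_num, Real.sqrt_sq (by norm_num)]]
      exact Real.sqrt_le_sqrt (by linarith)
    have hsqpos : (0:ℝ) < Real.sqrt ((N:ℝ) - 2) := by linarith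
    have hB12 : Real.pi / Real.sqrt ((N:ℝ) - 2) ≤ 1/2 := by
      rw [div_le_iff₀ hsqpos]
      nlinarith [Real.pi_le_four]
    obtain ⟨hx0, hxB⟩ := sSeq_bounds hN (j-1)
    set x : ℝ := sSeq N (j-1) with hxdef
    have hx12 : x ≤ 1/2 := le_trans hxB hB12
    have hr : 1 ≤ N - j - 2 := by omega
    have hj2 : j + 2 ≤ N := by omega
    have hcast : ((N - j - 2 : ℕ):ℝ) = (N:ℝ) - (j:ℝ) - 2 := by
      have he : N - j - 2 = N - (j+2) := by omega
      rw [he, Nat.cast_sub hj2]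
      push_cast; ring
    have hε0 : 0 < epsN N := epsN_pos' (by omega)
    have hεle := epsN_le hN
    have hx2 : x^2 ≤ Real.pi^2/((N:ℝ)-2) := by
      have h := pow_le_pow_left₀ hx0.le hxB 2
      rwa [div_pow, Real.sq_sqrt hN2.le] at h
    have h16 : Real.pi^2/((N:ℝ)-2) ≤ 16 * (1/((N:ℝ)-2)) := by
      rw [div_eq_mul_one_div]
      exact mul_le_mul_of_nonneg_right (by nlinarith [Real.pi_le_four, Real.pi_pos])
        (by positivity)
    have hεx : epsN N ≤ 1 - x^2/16 := by
      have : x^2 ≤ 16 * (1/((N:ℝ)-2)) := le_trans hx2 h16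
      linarith
    unfold Sfun at hsS
    rw [← hcast] at hsS
    obtain ⟨key, hsx⟩ := star hr hx0 hx12 hε0 hεx hs0 hsS
    exact stepA hs0 (by nlinarith [Real.pi_gt_three]) hx0
      (by nlinarith [Real.pi_gt_three]) key
  · exact part2
end

section
/- For every K > 0 there exists an integer N₀ such that for all integers N ≥ N₀, the hypercube (π/2, …, π/2) + N^{−3}·[−K, K]^{C(N,2)} is contained in Ω_N := J_N((0,π)^{C(N,2)}); that is, for every point (x_{ij})_{1≤i<j≤N} with |x_{ij} − π/2| ≤ K·N^{−3} for all i < j, there exist φ_{ij} ∈ (0,π) such that α_{ij}(φ_{1i}, φ_{1j}, …, φ_{i−1,i}, φ_{i−1,j}, φ_{ij}) = x_{ij} for all 1 ≤ i < j ≤ N. -/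
open Real Finset

/-- F in the expression for α_{ij}. -/
noncomputable def Fphi (φ : ℕ → ℕ → ℝ) (i j : ℕ) : ℝ :=
  ∑ m ∈ Finset.Icc 1 (i - 1), Real.cos (φ m i) * Real.cos (φ m j) *
    ∏ l ∈ Finset.Icc 1 (m - 1), (Real.sin (φ l i) * Real.sin (φ l j))

/-- X in the expression for α_{ij}. -/
noncomputable def Xphi (φ : ℕ → ℕ → ℝ) (i j : ℕ) : ℝ :=
  ∏ m ∈ Finset.Icc 1 (i - 1), (Real.sin (φ m i) * Real.sin (φ m j))

/-- α_{ij} = φ_{ij} if i = 1, and arccos(F + cos(φ_{ij})·X) if i ≥ 2. -/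
noncomputable def alphaMap (φ : ℕ → ℕ → ℝ) (i j : ℕ) : ℝ :=
  if i = 1 then φ i j
  else Real.arccos (Fphi φ i j + Real.cos (φ i j) * Xphi φ i j)

/-- Recursive construction of φ, level by level in the first index. -/
noncomputable def phiRec (x : ℕ → ℕ → ℝ) : ℕ → ℕ → ℕ → ℝ
  | 0 => x
  | n + 1 => fun i j =>
      if i = n + 1 then
        if i = 1 then x i j
        else Real.arccos ((Real.cos (x i j) - Fphi (phiRec x n) i j) / Xphi (phiRec x n) i j)
      else phiRec x n i j

lemma phiRec_stable (x : ℕ → ℕ → ℝ) : ∀ {n i : ℕ}, i ≤ n → ∀ j, phiRec x n i j = phiRec x i i j := by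
  intro n
  induction n with
  | zero => intro i hi j; interval_cases i; rfl
  | succ n ih =>
      intro i hi j
      rcases eq_or_lt_of_le hi with h | h
      · subst h; rfl
      · have hne : i ≠ n + 1 := by omega
        have : phiRec x (n+1) i j = phiRec x n i j := by simp [phiRec, hne]
        rw [this, ih (by omega)]

lemma Fphi_congr {φ ψ : ℕ → ℕ → ℝ} {i j : ℕ}
    (h : ∀ m, 1 ≤ m → m ≤ i - 1 → φ m i = ψ m i ∧ φ m j = ψ m j) :
    Fphi φ i j = Fphi ψ i j := by
  unfold Fphi
  refine Finset.sum_congr rfl fun m hm => ?_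
  rw [Finset.mem_Icc] at hm
  obtain ⟨h1, h2⟩ := h m hm.1 hm.2
  rw [h1, h2]
  congr 1
  refine Finset.prod_congr rfl fun l hl => ?_
  rw [Finset.mem_Icc] at hl
  obtain ⟨h1', h2'⟩ := h l hl.1 (by omega)
  rw [h1', h2']

lemma Xphi_congr {φ ψ : ℕ → ℕ → ℝ} {i j : ℕ}
    (h : ∀ m, 1 ≤ m → m ≤ i - 1 → φ m i = ψ m i ∧ φ m j = ψ m j) :
    Xphi φ i j = Xphi ψ i j := by
  unfold Xphi
  refine Finset.prod_congr rfl fun m hm => ?_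
  rw [Finset.mem_Icc] at hm
  obtain ⟨h1, h2⟩ := h m hm.1 hm.2
  rw [h1, h2]

lemma prod_ge_one_sub {δ : ℝ} (hδ0 : 0 ≤ δ) (hδ1 : δ ≤ 1) (s : Finset ℕ) (f : ℕ → ℝ)
    (h : ∀ a ∈ s, 1 - δ ≤ f a ∧ f a ≤ 1) :
    1 - (s.card : ℝ) * δ ≤ ∏ a ∈ s, f a := by
  induction s using Finset.cons_induction with
  | empty => simp
  | cons a s ha ih =>
      have hfa := h a (Finset.mem_cons_self a s)
      have hrest : ∀ b ∈ s, 1 - δ ≤ f b ∧ f b ≤ 1 := fun b hb => h b (Finset.mem_cons_of_mem hb)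
      have hP := ih hrest
      have hP0 : 0 ≤ ∏ b ∈ s, f b :=
        Finset.prod_nonneg fun b hb => by linarith [(hrest b hb).1]
      have hP1 : ∏ b ∈ s, f b ≤ 1 :=
        Finset.prod_le_one (fun b hb => by linarith [(hrest b hb).1]) (fun b hb => (hrest b hb).2)
      rw [Finset.prod_cons, Finset.card_cons]
      push_cast
      nlinarith [hfa.1, hfa.2, mul_nonneg hP0 hδ0]

set_option maxHeartbeats 1600000 in
/-- for every K > 0 and N large, the hypercube
(π/2,…,π/2) + N^{−3}·[−K,K]^{C(N,2)} is contained in Ω_N = J_N((0,π)^{C(N,2)}). -/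
theorem center_hypercube_subset_OmegaN (K : ℝ) (hK : 0 < K) :
    ∃ N₀ : ℕ, ∀ N : ℕ, N₀ ≤ N →
      ∀ x : ℕ → ℕ → ℝ,
        (∀ i j : ℕ, 1 ≤ i → i < j → j ≤ N → |x i j - Real.pi / 2| ≤ K / (N : ℝ) ^ 3) →
        ∃ φ : ℕ → ℕ → ℝ, ∀ i j : ℕ, 1 ≤ i → i < j → j ≤ N →
          φ i j ∈ Set.Ioo (0 : ℝ) Real.pi ∧ alphaMap φ i j = x i j := by
  refine ⟨max 2 ⌈8 * K⌉₊, fun N hN x hx => ?_⟩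
  obtain ⟨φ, hφdef⟩ : ∃ φ : ℕ → ℕ → ℝ, φ = phiRec x N := ⟨_, rfl⟩
  have hN2 : (2 : ℕ) ≤ N := le_trans (le_max_left _ _) hN
  have hKN : 8 * K ≤ (N : ℝ) := by
    calc 8 * K ≤ (⌈8 * K⌉₊ : ℝ) := Nat.le_ceil _
    _ ≤ (N : ℝ) := by exact_mod_cast le_trans (le_max_right _ _) hN
  set n : ℝ := (N : ℝ) with hn
  have hn2 : (2 : ℝ) ≤ n := by rw [hn]; exact_mod_cast hN2
  have hn0 : (0 : ℝ) < n := by linarith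
  have hn3 : (0 : ℝ) < n ^ 3 := by positivity
  set A : ℝ := K / n ^ 3 with hA
  have hA0 : 0 < A := by positivity
  -- A ≤ 1/(8 n²) ≤ 1/32
  have hA32 : A ≤ 1 / 32 := by
    rw [hA, div_le_div_iff₀ hn3 (by norm_num)]
    have h4n : 4 * n ≤ n ^ 3 := by nlinarith [mul_le_mul_of_nonneg_left (show (4:ℝ) ≤ n^2 by nlinarith) hn0.le]
    linarith
  set ε : ℝ := 2 * A with hε
  have hε0 : 0 < ε := by positivity
  have hε16 : ε ≤ 1 / 16 := by rw [hε]; linarith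
  -- n * ε² ≤ A / 4
  have hnε : n * ε ^ 2 ≤ A / 4 := by
    rw [hε, hA]
    have h1 : n * (2 * (K / n ^ 3)) ^ 2 = 4 * K ^ 2 / n ^ 5 := by
      field_simp; ring
    rw [h1]
    rw [div_le_div_iff₀ (by positivity) (by norm_num)]
    -- 16 K² n³ ≤ K n⁵ ⟺ 16 K ≤ n²
    have h2 : 16 * K ≤ n ^ 2 := by nlinarith
    have h3 : K / n ^ 3 * n ^ 5 = K * n ^ 2 := by field_simp
    rw [h3]
    nlinarith
  -- Key induction
  have key : ∀ i : ℕ, ∀ j : ℕ, 1 ≤ i → i < j → j ≤ N →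
      φ i j ∈ Set.Ioo (0 : ℝ) Real.pi ∧ |Real.cos (φ i j)| ≤ ε ∧ alphaMap φ i j = x i j := by
    intro i
    induction i using Nat.strong_induction_on with
    | _ i ih =>
      intro j h1i hij hjN
      have hxb := hx i j h1i hij hjN
      have hcosx : |Real.cos (x i j)| ≤ A := by
        have : Real.cos (x i j) = Real.sin (Real.pi / 2 - x i j) := (Real.sin_pi_div_two_sub _).symm
        rw [this]
        calc |Real.sin (Real.pi / 2 - x i j)| ≤ |Real.pi / 2 - x i j| := Real.abs_sin_le_abs
        _ = |x i j - Real.pi / 2| := abs_sub_comm _ _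
        _ ≤ A := hxb
      have hxIcc : x i j ∈ Set.Icc (0 : ℝ) Real.pi := by
        have h := abs_le.1 hxb
        have hπ : (3 : ℝ) ≤ Real.pi := by linarith [Real.pi_gt_three]
        constructor <;> [linarith [h.1]; linarith [h.2]]
      rcases eq_or_lt_of_le h1i with h1 | h2
      · -- i = 1
        subst h1
        have hφ1 : φ 1 j = x 1 j := by
          rw [hφdef, phiRec_stable x (by omega : 1 ≤ N)]
          rfl
        have hmem : x 1 j ∈ Set.Ioo (0 : ℝ) Real.pi := by
          have h := abs_le.1 hxb
          have hπ : (3 : ℝ) ≤ Real.pi := by linarith [Real.pi_gt_three]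
          constructor <;> [linarith [h.1]; linarith [h.2]]
        refine ⟨by rwa [hφ1], ?_, ?_⟩
        · rw [hφ1]; linarith
        · simp [alphaMap, hφ1]
      · -- i ≥ 2
        have h2i : 2 ≤ i := h2
        have hiN : i ≤ N := by omega
        -- facts from induction hypothesis
        have ihm : ∀ m, 1 ≤ m → m ≤ i - 1 →
            (φ m i ∈ Set.Ioo (0:ℝ) Real.pi ∧ |Real.cos (φ m i)| ≤ ε) ∧
            (φ m j ∈ Set.Ioo (0:ℝ) Real.pi ∧ |Real.cos (φ m j)| ≤ ε) := by
          intro m hm1 hm2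
          have hmi := ih m (by omega) i hm1 (by omega) hiN
          have hmj := ih m (by omega) j hm1 (by omega) hjN
          exact ⟨⟨hmi.1, hmi.2.1⟩, ⟨hmj.1, hmj.2.1⟩⟩
        -- identification of Fphi φ with Fphi (phiRec x (i-1))
        have hagree : ∀ m, 1 ≤ m → m ≤ i - 1 →
            phiRec x (i-1) m i = φ m i ∧ phiRec x (i-1) m j = φ m j := by
          intro m hm1 hm2
          constructor
          · rw [phiRec_stable x (by omega : m ≤ i - 1), hφdef,
              phiRec_stable x (by omega : m ≤ N)]
          · rw [phiRec_stable x (by omega : m ≤ i - 1), hφdef,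
              phiRec_stable x (by omega : m ≤ N)]
        have hF : Fphi (phiRec x (i-1)) i j = Fphi φ i j := Fphi_congr hagree
        have hX : Xphi (phiRec x (i-1)) i j = Xphi φ i j := Xphi_congr hagree
        -- unfolding φ i j
        obtain ⟨k, hk⟩ : ∃ k, i = k + 1 := ⟨i - 1, by omega⟩
        have hφij : φ i j = Real.arccos
            ((Real.cos (x i j) - Fphi φ i j) / Xphi φ i j) := by
          conv_lhs => rw [hφdef]
          rw [phiRec_stable x hiN]
          subst hk
          have hne1 : k + 1 ≠ 1 := by omega
          simp only [phiRec, if_true, if_neg hne1]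
          simp only [Nat.add_sub_cancel] at hF hX
          rw [hF, hX]
        -- bounds on F and X
        set F := Fphi φ i j with hFdef
        set X := Xphi φ i j with hXdef
        have hcard : ((Finset.Icc 1 (i-1)).card : ℝ) ≤ n := by
          rw [Nat.card_Icc]
          have h : i - 1 + 1 - 1 ≤ N := by omega
          rw [hn]
          exact_mod_cast h
        have hFbound : |F| ≤ n * ε ^ 2 := by
          rw [hFdef]
          unfold Fphi
          calc |∑ m ∈ Finset.Icc 1 (i - 1), Real.cos (φ m i) * Real.cos (φ m j) *
              ∏ l ∈ Finset.Icc 1 (m - 1), (Real.sin (φ l i) * Real.sin (φ l j))|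
              ≤ ∑ m ∈ Finset.Icc 1 (i - 1), |Real.cos (φ m i) * Real.cos (φ m j) *
              ∏ l ∈ Finset.Icc 1 (m - 1), (Real.sin (φ l i) * Real.sin (φ l j))| :=
                Finset.abs_sum_le_sum_abs _ _
            _ ≤ ∑ m ∈ Finset.Icc 1 (i - 1), ε ^ 2 := by
                refine Finset.sum_le_sum fun m hm => ?_
                rw [Finset.mem_Icc] at hm
                have h1 := (ihm m hm.1 hm.2).1.2
                have h2 := (ihm m hm.1 hm.2).2.2
                rw [abs_mul, abs_mul]
                have hprod : |∏ l ∈ Finset.Icc 1 (m - 1),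
                    (Real.sin (φ l i) * Real.sin (φ l j))| ≤ 1 := by
                  rw [Finset.abs_prod]
                  refine Finset.prod_le_one (fun l _ => abs_nonneg _) fun l _ => ?_
                  rw [abs_mul]
                  exact mul_le_one₀ (Real.abs_sin_le_one _) (abs_nonneg _) (Real.abs_sin_le_one _)
                calc |Real.cos (φ m i)| * |Real.cos (φ m j)| * |∏ l ∈ Finset.Icc 1 (m - 1),
                    (Real.sin (φ l i) * Real.sin (φ l j))|
                    ≤ |Real.cos (φ m i)| * |Real.cos (φ m j)| * 1 := by
                      exact mul_le_mul_of_nonneg_left hprod (by positivity)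
                  _ = |Real.cos (φ m i)| * |Real.cos (φ m j)| := by ring
                  _ ≤ ε * ε := mul_le_mul h1 h2 (abs_nonneg _) hε0.le
                  _ = ε ^ 2 := by ring
            _ = ((Finset.Icc 1 (i-1)).card : ℝ) * ε ^ 2 := by rw [Finset.sum_const]; ring
            _ ≤ n * ε ^ 2 := mul_le_mul_of_nonneg_right hcard (sq_nonneg ε)
        have hsinfact : ∀ m, 1 ≤ m → m ≤ i - 1 →
            1 - ε ^ 2 ≤ Real.sin (φ m i) * Real.sin (φ m j) ∧
            Real.sin (φ m i) * Real.sin (φ m j) ≤ 1 := by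
          intro m hm1 hm2
          obtain ⟨⟨hmi1, hmi2⟩, ⟨hmj1, hmj2⟩⟩ := ihm m hm1 hm2
          have hsi : 0 < Real.sin (φ m i) := Real.sin_pos_of_pos_of_lt_pi hmi1.1 hmi1.2
          have hsj : 0 < Real.sin (φ m j) := Real.sin_pos_of_pos_of_lt_pi hmj1.1 hmj1.2
          have hsi2 : 1 - ε ^ 2 ≤ Real.sin (φ m i) ^ 2 := by
            have := Real.sin_sq_add_cos_sq (φ m i)
            have hc : Real.cos (φ m i) ^ 2 ≤ ε ^ 2 := by
              rw [← sq_abs]; exact pow_le_pow_left₀ (abs_nonneg _) hmi2 2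
            linarith
          have hsj2 : 1 - ε ^ 2 ≤ Real.sin (φ m j) ^ 2 := by
            have := Real.sin_sq_add_cos_sq (φ m j)
            have hc : Real.cos (φ m j) ^ 2 ≤ ε ^ 2 := by
              rw [← sq_abs]; exact pow_le_pow_left₀ (abs_nonneg _) hmj2 2
            linarith
          have hε2 : ε ^ 2 ≤ 1 := by nlinarith
          have hsq : (1 - ε ^ 2) * (1 - ε ^ 2) ≤
              Real.sin (φ m i) ^ 2 * Real.sin (φ m j) ^ 2 :=
            mul_le_mul hsi2 hsj2 (by linarith) (sq_nonneg _)
          constructor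
          · nlinarith [mul_pos hsi hsj, hsq]
          · nlinarith [Real.sin_le_one (φ m i), Real.sin_le_one (φ m j)]
        have hε21 : ε ^ 2 ≤ 1 := by nlinarith
        have hXlow : 1 - n * ε ^ 2 ≤ X := by
          rw [hXdef]
          unfold Xphi
          calc 1 - n * ε ^ 2 ≤ 1 - ((Finset.Icc 1 (i-1)).card : ℝ) * ε ^ 2 := by
                linarith [mul_le_mul_of_nonneg_right hcard (sq_nonneg ε)]
            _ ≤ _ := prod_ge_one_sub (by positivity) hε21 _ _ fun m hm => by
                rw [Finset.mem_Icc] at hm; exact hsinfact m hm.1 hm.2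
        have hXhigh : X ≤ 1 := by
          rw [hXdef]; unfold Xphi
          refine Finset.prod_le_one (fun m hm => ?_) (fun m hm => ?_) <;>
            rw [Finset.mem_Icc] at hm
          · linarith [(hsinfact m hm.1 hm.2).1, hε21]
          · exact (hsinfact m hm.1 hm.2).2
        have hXpos : 0 < X := by
          have : n * ε ^ 2 ≤ A / 4 := hnε
          linarith
        -- bound on t
        set t : ℝ := (Real.cos (x i j) - F) / X with ht
        have htb : |t| ≤ ε := by
          rw [ht, abs_div, abs_of_pos hXpos, div_le_iff₀ hXpos]
          have h1 : |Real.cos (x i j) - F| ≤ A + A / 4 := by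
            calc |Real.cos (x i j) - F| ≤ |Real.cos (x i j)| + |F| := abs_sub _ _
              _ ≤ A + n * ε ^ 2 := add_le_add hcosx hFbound
              _ ≤ A + A / 4 := by linarith
          have h2 : 1 - A / 4 ≤ X := by linarith
          -- ε * X ≥ 2A (1 - A/4) = 2A - A²/2 ≥ A + A/4  since A ≤ 1/32
          calc |Real.cos (x i j) - F| ≤ A + A / 4 := h1
            _ ≤ ε * (1 - A / 4) := by rw [hε]; nlinarith
            _ ≤ ε * X := by nlinarith
        have ht1 : -1 ≤ t := by
          have := abs_le.1 htb; linarith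
        have ht1' : t ≤ 1 := by
          have := abs_le.1 htb; linarith
        have htlt : -1 < t ∧ t < 1 := by
          have := abs_le.1 htb
          constructor <;> nlinarith [this.1, this.2]
        have hφt : φ i j = Real.arccos t := by rw [hφij, ht]
        have hmem : φ i j ∈ Set.Ioo (0 : ℝ) Real.pi := by
          rw [hφt]
          refine ⟨Real.arccos_pos.2 htlt.2, ?_⟩
          rcases lt_or_eq_of_le (Real.arccos_le_pi t) with h | h
          · exact h
          · exfalso
            have := Real.arccos_eq_pi.1 h
            linarith [htlt.1]
        have hcosφ : Real.cos (φ i j) = t := by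
          rw [hφt]; exact Real.cos_arccos ht1 ht1'
        refine ⟨hmem, by rw [hcosφ]; exact htb, ?_⟩
        have hne1 : i ≠ 1 := by omega
        rw [alphaMap, if_neg hne1, hcosφ, ht, ← hFdef, ← hXdef,
          div_mul_cancel₀ _ (ne_of_gt hXpos)]
        rw [show F + (Real.cos (x i j) - F) = Real.cos (x i j) by ring]
        exact Real.arccos_cos hxIcc.1 hxIcc.2
  exact ⟨φ, fun i j h1 h2 h3 => ⟨(key i j h1 h2 h3).1, (key i j h1 h2 h3).2.2⟩⟩
end

section
/- Let λ > 0 and let x be a real number with x > λ. Then Σ_{k ∈ ℕ, k ≥ x} λ^k/k! ≤ (eλ/x)^x. Equivalently, if X is a Poisson random variable with mean λ, then P(X ≥ x) ≤ e^{−λ}·(eλ/x)^x. -/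
open Real

/-- Poisson tail bound: for 0 < λ < x,
Σ_{k ≥ x} λ^k/k! ≤ (eλ/x)^x; equivalently, for X Poisson with mean λ,
P(X ≥ x) = e^{−λ}·Σ_{k ≥ x} λ^k/k! ≤ e^{−λ}·(eλ/x)^x. -/
theorem poisson_tail_bound (l x : ℝ) (hl : 0 < l) (hx : l < x) :
    (∑' k : ℕ, if x ≤ (k : ℝ) then l ^ k / (Nat.factorial k : ℝ) else 0)
      ≤ (Real.exp 1 * l / x) ^ x := by
  have hx0 : 0 < x := hl.trans hx
  set t := Real.log (x / l) with ht_def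
  have ht : 0 < t := Real.log_pos (by rw [lt_div_iff₀ hl]; linarith)
  have het : Real.exp t = x / l := Real.exp_log (div_pos hx0 hl)
  -- the majorant
  have hg : ∀ k : ℕ, Real.exp (t * k - t * x) * (l ^ k / (k.factorial : ℝ))
      = Real.exp (-t * x) * (x ^ k / (k.factorial : ℝ)) := by
    intro k
    rw [sub_eq_add_neg, Real.exp_add, mul_comm t (k : ℝ), Real.exp_nat_mul, het]
    field_simp
    rw [← mul_pow, div_mul_cancel₀ x hl.ne']
  have hsum : Summable (fun k : ℕ => Real.exp (-t * x) * (x ^ k / (k.factorial : ℝ))) :=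
    (Real.summable_pow_div_factorial x).mul_left _
  have hsum' : Summable (fun k : ℕ => Real.exp (t * k - t * x) * (l ^ k / (k.factorial : ℝ))) := by
    simpa only [hg] using hsum
  have hle : ∀ k : ℕ, (if x ≤ (k : ℝ) then l ^ k / (Nat.factorial k : ℝ) else 0)
      ≤ Real.exp (t * k - t * x) * (l ^ k / (k.factorial : ℝ)) := by
    intro k
    split_ifs with h
    · have h1 : (1 : ℝ) ≤ Real.exp (t * k - t * x) := Real.one_le_exp (by nlinarith)
      have h2 : 0 < l ^ k / (k.factorial : ℝ) := by positivity
      nlinarith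
    · positivity
  have hsumL : Summable (fun k : ℕ => if x ≤ (k : ℝ) then l ^ k / (Nat.factorial k : ℝ) else 0) :=
    Summable.of_nonneg_of_le (fun k => by positivity) hle hsum'
  calc (∑' k : ℕ, if x ≤ (k : ℝ) then l ^ k / (Nat.factorial k : ℝ) else 0)
      ≤ ∑' k : ℕ, Real.exp (t * k - t * x) * (l ^ k / (k.factorial : ℝ)) :=
        Summable.tsum_le_tsum hle hsumL hsum'
    _ = ∑' k : ℕ, Real.exp (-t * x) * (x ^ k / (k.factorial : ℝ)) := by simp only [hg]
    _ = Real.exp (-t * x) * ∑' k : ℕ, (x ^ k / (k.factorial : ℝ)) := tsum_mul_left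
    _ = Real.exp (-t * x) * Real.exp x := by
        congr 1
        rw [Real.exp_eq_exp_ℝ, NormedSpace.exp_eq_tsum_div]
    _ = (Real.exp 1 * l / x) ^ x := by
        rw [← Real.exp_add, Real.rpow_def_of_pos (by positivity)]
        congr 1
        rw [Real.log_div (by positivity) hx0.ne', Real.log_mul (Real.exp_ne_zero 1) hl.ne',
          Real.log_exp, ht_def, Real.log_div hx0.ne' hl.ne']
        ring
end
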